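/- Let X be a group and A, B subgroups of X such that X is generated by A ∪ B and A ∩ B = {1}. Then the line graph of the coset graph Γ_X(A,B) is isomorphic, as a simple graph, to the Cayley graph of X with respect to the generating set (A ∪ B) ∖ {1}. -/

import Mathlib

/-- The coset graph Γ_X(A,B): vertices are (X/A) ⊔ (X/B); a coset xA is adjacent to a
coset yB iff they intersect, i.e. iff there is g ∈ X with gA = xA and gB = yB. -/
def cosetGraph {X : Type*} [Group X] (A B : Subgroup X) :
    SimpleGraph ((X ⧸ A) ⊕ (X ⧸ B)) where
  Adj v w :=
    match v, w with
    | Sum.inl x, Sum.inr y =>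
        ∃ g : X, (QuotientGroup.mk g : X ⧸ A) = x ∧ (QuotientGroup.mk g : X ⧸ B) = y
    | Sum.inr y, Sum.inl x =>
        ∃ g : X, (QuotientGroup.mk g : X ⧸ A) = x ∧ (QuotientGroup.mk g : X ⧸ B) = y
    | _, _ => False
  symm := by constructor; rintro (x | x) (y | y) h <;> first | exact h.elim | exact h
  loopless := by constructor; rintro (x | x) h <;> exact h

/-- The Cayley graph of X with respect to the symmetric generating set (A ∪ B) \ {1}:
x is adjacent to y iff x⁻¹y ∈ (A ∪ B) \ {1}. -/
def cayleyGraph {X : Type*} [Group X] (A B : Subgroup X) : SimpleGraph X where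
  Adj x y := x⁻¹ * y ∈ ((A : Set X) ∪ (B : Set X)) \ {1}
  symm := by
    constructor
    rintro x y ⟨hmem, hne⟩
    have h : y⁻¹ * x = (x⁻¹ * y)⁻¹ := by group
    constructor
    · rw [h]
      rcases hmem with hA | hA
      · exact Or.inl (A.inv_mem hA)
      · exact Or.inr (B.inv_mem hA)
    · intro hc
      apply hne
      have hc' : y⁻¹ * x = 1 := hc
      rw [h] at hc'
      simpa using inv_eq_one.mp hc'
  loopless := by
    constructor
    intro x h
    exact h.2 (by simp)

/-- The line graph of a simple graph G: vertices are the edges of G, two distinct edges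
being adjacent iff they share a vertex. -/
def lineGraph {V : Type*} (G : SimpleGraph V) : SimpleGraph G.edgeSet where
  Adj e f := e ≠ f ∧ ∃ v : V, v ∈ (e : Sym2 V) ∧ v ∈ (f : Sym2 V)
  symm := by
    constructor
    rintro e f ⟨hne, v, hv1, hv2⟩
    exact ⟨hne.symm, v, hv2, hv1⟩
  loopless := by constructor; rintro e ⟨hne, -⟩; exact hne rfl

/-- If X is generated by subgroups A and B with A ∩ B = {1}, then the line graph of the
coset graph Γ_X(A,B) is isomorphic to the Cayley graph of X with respect to (A ∪ B)\{1}. -/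
theorem lineGraph_cosetGraph_iso_cayleyGraph
    {X : Type*} [Group X] (A B : Subgroup X)
    (hgen : Subgroup.closure ((A : Set X) ∪ (B : Set X)) = ⊤)
    (hAB : A ⊓ B = ⊥) :
    Nonempty (lineGraph (cosetGraph A B) ≃g cayleyGraph A B) := by
  classical
  set G := cosetGraph A B with hG
  have hadj : ∀ g : X, G.Adj (Sum.inl ((g : X ⧸ A))) (Sum.inr ((g : X ⧸ B))) :=
    fun g => ⟨g, rfl, rfl⟩
  let f : X → G.edgeSet := fun g =>
    ⟨s(Sum.inl ((g : X ⧸ A)), Sum.inr ((g : X ⧸ B))), (G.mem_edgeSet).mpr (hadj g)⟩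
  have key : ∀ g h : X, g⁻¹ * h ∈ A → g⁻¹ * h ∈ B → g = h := by
    intro g h hA hB
    have : g⁻¹ * h ∈ A ⊓ B := ⟨hA, hB⟩
    rw [hAB, Subgroup.mem_bot] at this
    exact inv_mul_eq_one.mp this
  have hinj : Function.Injective f := by
    intro g h hfe
    have := Subtype.ext_iff.mp hfe
    simp only [f, Sym2.eq_iff, Subtype.coe_mk] at this
    rcases this with ⟨h1, h2⟩ | ⟨h1, h2⟩
    · have hA' : (g : X ⧸ A) = (h : X ⧸ A) := Sum.inl.inj h1
      have hB' : (g : X ⧸ B) = (h : X ⧸ B) := Sum.inr.inj h2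
      exact key g h (QuotientGroup.eq.mp hA') (QuotientGroup.eq.mp hB')
    · exact absurd h1 (by simp)
  have hsurj : Function.Surjective f := by
    rintro ⟨e, he⟩
    induction e with
    | h x y =>
      cases x with
      | inl x =>
        cases y with
        | inl y => exact absurd he (by simp [hG, cosetGraph, SimpleGraph.mem_edgeSet])
        | inr y =>
          obtain ⟨g, hg1, hg2⟩ := (G.mem_edgeSet).mp he
          exact ⟨g, by simp [f, hg1, hg2]⟩
      | inr x =>
        cases y with
        | inl y =>
          obtain ⟨g, hg1, hg2⟩ := (G.mem_edgeSet).mp he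
          refine ⟨g, Subtype.ext ?_⟩
          simp only [f]
          rw [hg1, hg2, Sym2.eq_swap]
        | inr y => exact absurd he (by simp [hG, cosetGraph, SimpleGraph.mem_edgeSet])
  have hmap : ∀ g h : X, (lineGraph G).Adj (f g) (f h) ↔ (cayleyGraph A B).Adj g h := by
    intro g h
    constructor
    · rintro ⟨hne, v, hv1, hv2⟩
      have hgh : g ≠ h := fun e => hne (by rw [e])
      refine ⟨?_, by simpa using fun e => hgh (inv_mul_eq_one.mp e)⟩
      simp only [f, Sym2.mem_iff] at hv1 hv2
      rcases hv1 with h1 | h1 <;> rcases hv2 with h2 | h2 <;> rw [h1] at h2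
      · exact Or.inl (QuotientGroup.eq.mp (Sum.inl.inj h2))
      · exact absurd h2 (by simp)
      · exact absurd h2 (by simp)
      · exact Or.inr (QuotientGroup.eq.mp (Sum.inr.inj h2))
    · rintro ⟨hmem, hne⟩
      have hgh : g ≠ h := by
        intro e; exact hne (by simp [e])
      refine ⟨fun e => hgh (hinj e), ?_⟩
      rcases hmem with hA' | hB'
      · exact ⟨Sum.inl ((g : X ⧸ A)), by simp [f],
          by simp [f, Sym2.mem_iff]; exact QuotientGroup.eq.mpr hA'⟩
      · exact ⟨Sum.inr ((g : X ⧸ B)), by simp [f],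
          by simp [f, Sym2.mem_iff]; exact QuotientGroup.eq.mpr hB'⟩
  let iso : cayleyGraph A B ≃g lineGraph G :=
    ⟨Equiv.ofBijective f ⟨hinj, hsurj⟩, fun {a b} => hmap a b⟩
  exact ⟨iso.symm⟩
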